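/- arXiv:2605.08860 — 2 statements merged into one kernel-verified Lean document; each statement's English description precedes it below -/
import Mathlib

section
/- For q ∈ (0,1) and q' with 0 < q ≤ q' ≤ 1, and any probability vector p ∈ ℝ^W_{+} with ∑ p_i = 1, one has 1 ≤ (∑_{i=1}^W p_i^q)^{(q−q')/(q−1)} · (∑_{i=1}^W p_i^{q'}) ≤ W^{1−q}. -/
open Finset

lemma sum_rpow_bounds (W : ℕ) (hW : 1 ≤ W) (r : ℝ) (hr0 : 0 < r) (hr1 : r ≤ 1)
    (p : Fin W → ℝ) (hp : ∀ i, 0 ≤ p i) (hsum : ∑ i, p i = 1) :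
    1 ≤ ∑ i, p i ^ r ∧ ∑ i, p i ^ r ≤ (W : ℝ) ^ (1 - r) := by
  have hWpos : (0:ℝ) < W := by exact_mod_cast hW
  constructor
  · calc (1:ℝ) = ∑ i, p i := hsum.symm
    _ ≤ ∑ i, p i ^ r := by
        apply Finset.sum_le_sum
        intro i _
        rcases eq_or_lt_of_le (hp i) with h | h
        · simp [← h, Real.zero_rpow hr0.ne']
        · have hle1 : p i ≤ 1 := by
            rw [← hsum]
            exact Finset.single_le_sum (fun j _ => hp j) (Finset.mem_univ i)
          calc p i = p i ^ (1:ℝ) := (Real.rpow_one _).symm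
          _ ≤ p i ^ r := Real.rpow_le_rpow_of_exponent_ge h hle1 hr1
  · have key := Real.arith_mean_le_rpow_mean Finset.univ (fun _ : Fin W => (W:ℝ)⁻¹)
      (fun i => p i ^ r) (fun i _ => by positivity)
      (by simp [Finset.card_univ]; field_simp) (fun i _ => Real.rpow_nonneg (hp i) r)
      (p := 1/r) (by rw [le_div_iff₀ hr0]; linarith)
    have h1 : ∀ i, (p i ^ r) ^ (1/r) = p i := by
      intro i
      rw [← Real.rpow_mul (hp i), mul_one_div, div_self hr0.ne', Real.rpow_one]
    rw [show (1/(1/r)) = r by field_simp] at key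
    simp only [h1, ← Finset.mul_sum, hsum, mul_one] at key
    have : ∑ i, p i ^ r ≤ (W:ℝ) * ((W:ℝ)⁻¹) ^ r := by
      calc ∑ i, p i ^ r = (W:ℝ) * ((W:ℝ)⁻¹ * ∑ i, p i ^ r) := by
            field_simp
      _ ≤ (W:ℝ) * ((W:ℝ)⁻¹) ^ r := by
            apply mul_le_mul_of_nonneg_left key hWpos.le
    calc ∑ i, p i ^ r ≤ (W:ℝ) * ((W:ℝ)⁻¹) ^ r := this
    _ = (W:ℝ) ^ (1 - r) := by
        rw [show (1-r) = 1 + (-r) by ring, Real.rpow_add hWpos, Real.rpow_one,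
          Real.rpow_neg hWpos.le, Real.inv_rpow hWpos.le]

theorem escort_factor_bounds (W : ℕ) (hW : 1 ≤ W) (q q' : ℝ)
    (hq0 : 0 < q) (hq1 : q < 1) (hqq' : q ≤ q') (hq'1 : q' ≤ 1)
    (p : Fin W → ℝ) (hp : ∀ i, 0 ≤ p i) (hsum : ∑ i, p i = 1) :
    1 ≤ (∑ i, p i ^ q) ^ ((q - q') / (q - 1)) * (∑ i, p i ^ q') ∧
      (∑ i, p i ^ q) ^ ((q - q') / (q - 1)) * (∑ i, p i ^ q') ≤ (W : ℝ) ^ (1 - q) := by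
  have hWpos : (0:ℝ) < W := by exact_mod_cast hW
  obtain ⟨hq_lo, hq_hi⟩ := sum_rpow_bounds W hW q hq0 hq1.le p hp hsum
  have hq'0 : 0 < q' := lt_of_lt_of_le hq0 hqq'
  obtain ⟨hq'_lo, hq'_hi⟩ := sum_rpow_bounds W hW q' hq'0 hq'1 p hp hsum
  set α := (q - q') / (q - 1) with hα
  have hα0 : 0 ≤ α := by
    rw [hα, div_nonneg_iff]; right; constructor <;> linarith
  have hαval : (1 - q) * α = q' - q := by
    have hne : q - 1 ≠ 0 := by linarith
    rw [hα]; field_simp; ring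
  constructor
  · have h1 : (1:ℝ) ≤ (∑ i, p i ^ q) ^ α := Real.one_le_rpow hq_lo hα0
    nlinarith
  · have h2 : (∑ i, p i ^ q) ^ α ≤ ((W:ℝ) ^ (1-q)) ^ α :=
      Real.rpow_le_rpow (by linarith) hq_hi hα0
    have h3 : ((W:ℝ) ^ (1-q)) ^ α = (W:ℝ) ^ (q' - q) := by
      rw [← Real.rpow_mul hWpos.le, hαval]
    have h4 : (W:ℝ) ^ (q' - q) * (W:ℝ) ^ (1 - q') = (W:ℝ) ^ (1 - q) := by
      rw [← Real.rpow_add hWpos]; ring_nf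
    calc (∑ i, p i ^ q) ^ α * (∑ i, p i ^ q') ≤ (W:ℝ) ^ (q' - q) * (W:ℝ) ^ (1 - q') := by
          apply mul_le_mul (h3 ▸ h2) hq'_hi (by linarith) (by positivity)
    _ = (W:ℝ) ^ (1 - q) := h4
end

section
/- Let W ≥ 2, q ∈ (0,1), q' = 1, e_1 < e_W, and U ∈ (e_1, e_W). Then the maximizer of S_q(p) over {p ∈ ℝ^W : p_i ≥ 0, ∑ p_i = 1, ∑ p_i e_i = U} exists, is unique, and has all coordinates strictly positive. -/
open Finset

/-- Tsallis entropy `S_q(p) = k (∑ i, p_i^q − 1)/(1−q)` (real power). -/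
noncomputable def tsallisEntropy (k q : ℝ) {ι : Type*} [Fintype ι] (p : ι → ℝ) : ℝ :=
  k * ((∑ i, p i ^ q) - 1) / (1 - q)

set_option maxHeartbeats 1000000 in
private lemma ent_mono {k q x y : ℝ} (hk : 0 < k) (hq1 : q < 1) (h : x ≤ y) :
    k * (x - 1) / (1 - q) ≤ k * (y - 1) / (1 - q) := by
  have h1 : (0:ℝ) < 1 - q := by linarith
  gcongr

private lemma ent_strict {k q x y : ℝ} (hk : 0 < k) (hq1 : q < 1) (h : x < y) :
    k * (x - 1) / (1 - q) < k * (y - 1) / (1 - q) := by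
  have h1 : (0:ℝ) < 1 - q := by linarith
  exact (div_lt_div_iff_of_pos_right h1).2 (by nlinarith)


private lemma exists_pos_feasible
    (W : ℕ) (hW : 2 ≤ W) (e : Fin W → ℝ)
    (hee : e ⟨0, lt_of_lt_of_le two_pos hW⟩ < e ⟨W - 1, Nat.sub_lt (lt_of_lt_of_le two_pos hW) one_pos⟩)
    (U : ℝ) (hU : e ⟨0, lt_of_lt_of_le two_pos hW⟩ < U) (hU' : U < e ⟨W - 1, Nat.sub_lt (lt_of_lt_of_le two_pos hW) one_pos⟩) :
    ∃ ps : Fin W → ℝ, (∀ i, 0 < ps i) ∧ ∑ i, ps i = 1 ∧ ∑ i, ps i * e i = U := by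
  set i0 : Fin W := ⟨0, lt_of_lt_of_le two_pos hW⟩ with hi0
  set iW : Fin W := ⟨W - 1, Nat.sub_lt (lt_of_lt_of_le two_pos hW) one_pos⟩ with hiW
  set a := e i0 with ha
  set b := e iW with hb
  have hab : a < b := hee
  have hne0W : i0 ≠ iW := by
    intro h; rw [ha, hb, h] at hab; exact lt_irrefl _ hab
  have hW0 : (0:ℝ) < (W:ℝ) := by positivity
  set Tb : ℝ := (∑ j, e j) / W with hTb
  set δ : ℝ := min (U - a) (b - U) with hδdef
  have hδ : 0 < δ := lt_min (by linarith [hU]) (by linarith [hU'])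
  set ν : ℝ := min (1/2) (δ / (2 * (|U - Tb| + 1))) with hνdef
  have hM0 : (0:ℝ) ≤ |U - Tb| := abs_nonneg _
  have hν0 : 0 < ν := lt_min one_half_pos (by positivity)
  have hν2 : ν ≤ 1/2 := min_le_left _ _
  have hν1 : (0:ℝ) < 1 - ν := by linarith
  have hνa : ν * |U - Tb| ≤ δ / 2 := by
    have h1 : ν ≤ δ / (2 * (|U - Tb| + 1)) := min_le_right _ _
    rw [le_div_iff₀ (by positivity)] at h1
    nlinarith [mul_le_mul_of_nonneg_right h1 hM0]
  set V : ℝ := (U - ν * Tb) / (1 - ν) with hVdef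
  have haV : a ≤ V := by
    rw [hVdef, le_div_iff₀ hν1]
    have h3 : Tb - U ≤ |U - Tb| := by rw [abs_sub_comm]; exact le_abs_self _
    have h4 : δ ≤ U - a := min_le_left _ _
    nlinarith [mul_le_mul_of_nonneg_left h3 hν0.le, hU]
  have hVb : V ≤ b := by
    rw [hVdef, div_le_iff₀ hν1]
    have h3 : U - Tb ≤ |U - Tb| := le_abs_self _
    have h4 : δ ≤ b - U := min_le_right _ _
    nlinarith [mul_le_mul_of_nonneg_left h3 hν0.le, hU']
  set D : ℝ := b - a with hD
  have hD0 : (0:ℝ) < D := by rw [hD]; linarith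
  set x : ℝ := (1 - ν) * (b - V) / D with hx
  set y : ℝ := (1 - ν) * (V - a) / D with hy
  have hx0 : 0 ≤ x := div_nonneg (mul_nonneg hν1.le (by linarith)) hD0.le
  have hy0 : 0 ≤ y := div_nonneg (mul_nonneg hν1.le (by linarith)) hD0.le
  refine ⟨fun j => ν / W + (if j = i0 then x else if j = iW then y else 0), ?_, ?_, ?_⟩
  · intro j
    apply add_pos_of_pos_of_nonneg (div_pos hν0 hW0)
    split_ifs <;> simp [hx0, hy0]
  · have h1 : ∑ j : Fin W, (ν / W + (if j = i0 then x else if j = iW then y else 0))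
        = (W:ℝ) * (ν / W) + (x + y) := by
      rw [Finset.sum_add_distrib]
      congr 1
      · simp [Finset.sum_const, Finset.card_univ, nsmul_eq_mul]
      · have hsplit : ∀ j : Fin W,
            (if j = i0 then x else if j = iW then y else 0)
              = (if j = i0 then x else 0) + (if j = iW then y else 0) := by
          intro j
          rcases eq_or_ne j i0 with h1 | h1
          · subst h1; simp [hne0W]
          · rcases eq_or_ne j iW with h2 | h2
            · subst h2; simp [h1]
            · simp [h1, h2]
        rw [Finset.sum_congr rfl (fun j _ => hsplit j), Finset.sum_add_distrib,
          Finset.sum_ite_eq' Finset.univ i0 (fun _ => x),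
          Finset.sum_ite_eq' Finset.univ iW (fun _ => y)]
        simp
    rw [h1, hx, hy]
    field_simp
    ring
  · have h1 : ∑ j : Fin W, (ν / W + (if j = i0 then x else if j = iW then y else 0)) * e j
        = (ν / W) * (∑ j, e j) + (x * a + y * b) := by
      have h2 : ∀ j : Fin W,
          (ν / W + (if j = i0 then x else if j = iW then y else 0)) * e j
            = ν / W * e j
              + ((if j = i0 then x * e i0 else 0) + (if j = iW then y * e iW else 0)) := by
        intro j
        rcases eq_or_ne j i0 with h1 | h1
        · subst h1; simp [hne0W]; ring
        · rcases eq_or_ne j iW with h2 | h2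
          · subst h2; simp [h1]; ring
          · simp [h1, h2]
      rw [Finset.sum_congr rfl (fun j _ => h2 j), Finset.sum_add_distrib,
        Finset.sum_add_distrib, ← Finset.mul_sum,
        Finset.sum_ite_eq' Finset.univ i0 (fun _ => x * e i0),
        Finset.sum_ite_eq' Finset.univ iW (fun _ => y * e iW)]
      simp [ha, hb]
    rw [h1]
    have hTb' : (∑ j, e j) = Tb * W := by rw [hTb]; field_simp
    rw [hTb', hx, hy, hVdef]
    field_simp
    ring


private lemma mid_strict {W : ℕ} {q : ℝ} (hq0 : 0 < q) (hq1 : q < 1)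
    {u v : Fin W → ℝ} (hu : ∀ i, 0 ≤ u i) (hv : ∀ i, 0 ≤ v i) (hne : u ≠ v) :
    (∑ i, u i ^ q) / 2 + (∑ i, v i ^ q) / 2 < ∑ i, ((u i + v i) / 2) ^ q := by
  obtain ⟨j, hj⟩ := Function.ne_iff.1 hne
  have hL : (∑ i, u i ^ q) / 2 + (∑ i, v i ^ q) / 2
      = ∑ i : Fin W, (u i ^ q / 2 + v i ^ q / 2) := by
    rw [Finset.sum_add_distrib, Finset.sum_div, Finset.sum_div]
  rw [hL]
  apply Finset.sum_lt_sum
  · intro i _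
    have h1 := (Real.concaveOn_rpow hq0.le hq1.le).2 (Set.mem_Ici.2 (hu i))
      (Set.mem_Ici.2 (hv i)) (by norm_num : (0:ℝ) ≤ 1/2) (by norm_num : (0:ℝ) ≤ 1/2)
      (by norm_num)
    simp only [smul_eq_mul] at h1
    have h2 : (u i + v i) / 2 = 1/2 * u i + 1/2 * v i := by ring
    rw [h2]
    linarith
  · refine ⟨j, Finset.mem_univ j, ?_⟩
    have h1 := (Real.strictConcaveOn_rpow hq0 hq1).2 (Set.mem_Ici.2 (hu j))
      (Set.mem_Ici.2 (hv j)) hj (by norm_num : (0:ℝ) < 1/2) (by norm_num : (0:ℝ) < 1/2)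
      (by norm_num)
    simp only [smul_eq_mul] at h1
    have h2 : (u j + v j) / 2 = 1/2 * u j + 1/2 * v j := by ring
    rw [h2]
    linarith

theorem unique_positive_maximizer_linear_constraint
    (W : ℕ) (hW : 2 ≤ W) (k q : ℝ) (hk : 0 < k) (hq0 : 0 < q) (hq1 : q < 1)
    (e : Fin W → ℝ) (he : Monotone e)
    (hee : e ⟨0, by omega⟩ < e ⟨W - 1, by omega⟩)
    (U : ℝ) (hU : e ⟨0, by omega⟩ < U) (hU' : U < e ⟨W - 1, by omega⟩) :
    ∃ p : Fin W → ℝ,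
      ((∀ i, 0 ≤ p i) ∧ ∑ i, p i = 1 ∧ ∑ i, p i * e i = U) ∧
      (∀ p' : Fin W → ℝ,
        ((∀ i, 0 ≤ p' i) ∧ ∑ i, p' i = 1 ∧ ∑ i, p' i * e i = U) →
          tsallisEntropy k q p' ≤ tsallisEntropy k q p) ∧
      (∀ i, 0 < p i) ∧
      (∀ p'' : Fin W → ℝ,
        ((∀ i, 0 ≤ p'' i) ∧ ∑ i, p'' i = 1 ∧ ∑ i, p'' i * e i = U) →
        (∀ p' : Fin W → ℝ,
          ((∀ i, 0 ≤ p' i) ∧ ∑ i, p' i = 1 ∧ ∑ i, p' i * e i = U) →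
            tsallisEntropy k q p' ≤ tsallisEntropy k q p'') →
        p'' = p) := by
  have hq1' : (0:ℝ) < 1 - q := by linarith
  have hk' : k ≠ 0 := hk.ne'
  have h1q : (1:ℝ) - q ≠ 0 := hq1'.ne'
  set K : Set (Fin W → ℝ) :=
    {p | (∀ i, 0 ≤ p i) ∧ ∑ i, p i = 1 ∧ ∑ i, p i * e i = U} with hKdef
  set F : (Fin W → ℝ) → ℝ := fun p => ∑ i, p i ^ q with hFdef
  have entF : ∀ p : Fin W → ℝ, tsallisEntropy k q p = k * (F p - 1) / (1 - q) :=
    fun p => rfl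
  obtain ⟨ps, hpspos, hpsSum, hpsMean⟩ := exists_pos_feasible W hW e hee U hU hU'
  have hpsK : ps ∈ K := ⟨fun j => (hpspos j).le, hpsSum, hpsMean⟩
  -- compactness and existence of a maximizer
  have hKsub : K ⊆ Set.Icc (fun _ => (0:ℝ)) (fun _ => (1:ℝ)) := by
    rintro p ⟨hp0, hp1, -⟩
    constructor
    · intro j; exact hp0 j
    · intro j
      calc p j ≤ ∑ i, p i := Finset.single_le_sum (fun i _ => hp0 i) (Finset.mem_univ j)
      _ = 1 := hp1
  have hKclosed : IsClosed K := by
    have h1 : IsClosed {p : Fin W → ℝ | ∀ i, 0 ≤ p i} := by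
      have h0 : {p : Fin W → ℝ | ∀ i, 0 ≤ p i} = ⋂ i, {p | 0 ≤ p i} := by
        ext p; simp
      rw [h0]
      exact isClosed_iInter fun i => isClosed_le continuous_const (continuous_apply i)
    have h2 : IsClosed {p : Fin W → ℝ | ∑ i, p i = 1} :=
      isClosed_eq (continuous_finset_sum _ fun i _ => continuous_apply i) continuous_const
    have h3 : IsClosed {p : Fin W → ℝ | ∑ i, p i * e i = U} :=
      isClosed_eq (continuous_finset_sum _ fun i _ => (continuous_apply i).mul continuous_const)
        continuous_const
    have h4 : K = ({p : Fin W → ℝ | ∀ i, 0 ≤ p i} ∩ {p | ∑ i, p i = 1})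
        ∩ {p | ∑ i, p i * e i = U} := by
      ext p; simp only [hKdef, Set.mem_setOf_eq, Set.mem_inter_iff]; tauto
    rw [h4]
    exact (h1.inter h2).inter h3
  have hKcomp : IsCompact K := (isCompact_Icc).of_isClosed_subset hKclosed hKsub
  have hcont : Continuous (fun p : Fin W → ℝ => tsallisEntropy k q p) := by
    unfold tsallisEntropy
    exact (continuous_const.mul ((continuous_finset_sum _ fun i _ =>
      (Real.continuous_rpow_const hq0.le).comp (continuous_apply i)).sub
      continuous_const)).div_const _
  obtain ⟨p, hpK, hmax⟩ := hKcomp.exists_isMaxOn ⟨ps, hpsK⟩ hcont.continuousOn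
  have hmax' : ∀ p' ∈ K, tsallisEntropy k q p' ≤ tsallisEntropy k q p :=
    fun p' hp' => hmax hp'
  have hFmax : ∀ p' ∈ K, F p' ≤ F p := by
    intro p' hp'
    by_contra hcon
    push_neg at hcon
    have h5 := ent_strict (k := k) hk hq1 hcon
    rw [← entF, ← entF] at h5
    exact absurd (hmax' p' hp') (not_le.2 h5)
  -- positivity of the maximizer
  have hpos : ∀ i, 0 < p i := by
    intro i
    rcases lt_or_eq_of_le (hpK.1 i) with h | h
    · exact h
    exfalso
    have hpi : p i = 0 := h.symm
    have hFp : 0 < F p := by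
      obtain ⟨j, hj⟩ : ∃ j, 0 < p j := by
        by_contra hcon
        push_neg at hcon
        have h6 : ∑ i, p i = 0 := Finset.sum_eq_zero fun j _ =>
          le_antisymm (hcon j) (hpK.1 j)
        rw [hpK.2.1] at h6; norm_num at h6
      have h1 : 0 < p j ^ q := Real.rpow_pos_of_pos hj q
      have h2 : (0:ℝ) ≤ ∑ i' ∈ Finset.univ.erase j, p i' ^ q :=
        Finset.sum_nonneg fun i' _ => Real.rpow_nonneg (hpK.1 i') q
      calc (0:ℝ) < p j ^ q := h1
        _ ≤ ∑ i' ∈ Finset.univ.erase j, p i' ^ q + p j ^ q := le_add_of_nonneg_left h2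
        _ = F p := Finset.sum_erase_add _ _ (Finset.mem_univ j)
    set c : ℝ := ps i ^ q / F p with hc
    have hc0 : 0 < c := div_pos (Real.rpow_pos_of_pos (hpspos i) q) hFp
    set t : ℝ := min (1/2) (c ^ (1-q)⁻¹ / 2) with ht
    have ht0 : 0 < t := lt_min one_half_pos (by positivity)
    have ht2 : t ≤ 1/2 := min_le_left _ _
    have htc : t ^ (1 - q) < c := by
      have h1 : t < c ^ (1-q)⁻¹ := lt_of_le_of_lt (min_le_right _ _)
        (by have : (0:ℝ) < c ^ (1-q)⁻¹ := by positivity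
            linarith)
      calc t ^ (1 - q) < (c ^ (1-q)⁻¹) ^ (1 - q) :=
            Real.rpow_lt_rpow ht0.le h1 hq1'
        _ = c := Real.rpow_inv_rpow hc0.le h1q
    set pt : Fin W → ℝ := fun j => (1-t) * p j + t * ps j with hpt
    have hptK : pt ∈ K := by
      refine ⟨fun j => add_nonneg (mul_nonneg (by linarith) (hpK.1 j))
        (mul_nonneg ht0.le (hpspos j).le), ?_, ?_⟩
      · show ∑ j : Fin W, ((1-t) * p j + t * ps j) = 1
        rw [Finset.sum_add_distrib, ← Finset.mul_sum, ← Finset.mul_sum,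
          hpK.2.1, hpsSum]
        ring
      · show ∑ j : Fin W, ((1-t) * p j + t * ps j) * e j = U
        have h7 : ∀ j : Fin W, ((1-t) * p j + t * ps j) * e j
            = (1-t) * (p j * e j) + t * (ps j * e j) := fun j => by ring
        rw [Finset.sum_congr rfl fun j _ => h7 j, Finset.sum_add_distrib,
          ← Finset.mul_sum, ← Finset.mul_sum, hpK.2.2, hpsMean]
        ring
    have hterm : ∀ j, (1-t) * p j ^ q ≤ ((1-t) * p j + t * ps j) ^ q := by
      intro j
      have h0 : (0:ℝ) ≤ (1-t) * p j := mul_nonneg (by linarith) (hpK.1 j)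
      have h8 : ((1-t) * p j) ^ q ≤ ((1-t) * p j + t * ps j) ^ q :=
        Real.rpow_le_rpow h0
          (le_add_of_nonneg_right (mul_nonneg ht0.le (hpspos j).le)) hq0.le
      refine le_trans ?_ h8
      rw [Real.mul_rpow (by linarith) (hpK.1 j)]
      have h9 : (1-t) ≤ (1-t) ^ q := by
        calc (1-t) = (1-t) ^ (1:ℝ) := (Real.rpow_one _).symm
        _ ≤ (1-t) ^ q := Real.rpow_le_rpow_of_exponent_ge (by linarith)
            (by linarith) hq1.le
      exact mul_le_mul_of_nonneg_right h9 (Real.rpow_nonneg (hpK.1 j) q)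
    have hFpt : (1-t) * F p + t ^ q * ps i ^ q ≤ F pt := by
      have hsum : F pt = ∑ j ∈ Finset.univ.erase i, ((1-t) * p j + t * ps j) ^ q
          + ((1-t) * p i + t * ps i) ^ q :=
        (Finset.sum_erase_add _ _ (Finset.mem_univ i)).symm
      have hi' : ((1-t) * p i + t * ps i) ^ q = t ^ q * ps i ^ q := by
        rw [hpi, mul_zero, zero_add, Real.mul_rpow ht0.le (hpspos i).le]
      have herase : (1-t) * F p = ∑ j ∈ Finset.univ.erase i, (1-t) * p j ^ q := by
        have hFe : F p = ∑ j ∈ Finset.univ.erase i, p j ^ q := by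
          have h10 : (∑ j ∈ Finset.univ.erase i, p j ^ q) + p i ^ q = F p :=
            Finset.sum_erase_add _ _ (Finset.mem_univ i)
          have h11 : p i ^ q = 0 := by rw [hpi, Real.zero_rpow hq0.ne']
          linarith
        rw [hFe, Finset.mul_sum]
      rw [hsum, hi', herase]
      have h12 : ∑ j ∈ Finset.univ.erase i, (1-t) * p j ^ q
          ≤ ∑ j ∈ Finset.univ.erase i, ((1-t) * p j + t * ps j) ^ q :=
        Finset.sum_le_sum fun j _ => hterm j
      linarith
    have hlt : F p < F pt := by
      have h5 : t * F p < t ^ q * ps i ^ q := by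
        have h6 : t ^ (1-q) * F p < ps i ^ q := by
          have h14 := mul_lt_mul_of_pos_right htc hFp
          rwa [hc, div_mul_cancel₀ _ hFp.ne'] at h14
        have h20 : t * F p = t ^ q * (t ^ (1-q) * F p) := by
          rw [← mul_assoc, ← Real.rpow_add ht0]
          norm_num
        rw [h20]
        exact mul_lt_mul_of_pos_left h6 (Real.rpow_pos_of_pos ht0 q)
      linarith [hFpt]
    exact absurd (hFmax pt hptK) (not_le.2 hlt)
  -- uniqueness
  refine ⟨p, hpK, fun p' hp' => hmax' p' hp', hpos, ?_⟩
  intro p'' hK'' hmax''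
  by_contra hne
  have hEeq : tsallisEntropy k q p'' = tsallisEntropy k q p :=
    le_antisymm (hmax' p'' hK'') (hmax'' p hpK)
  have hFeq : F p'' = F p := by
    have h15 := hEeq
    rw [entF, entF] at h15
    field_simp at h15
    linarith
  set m : Fin W → ℝ := fun i => (p'' i + p i) / 2 with hm
  have hmK : m ∈ K := by
    refine ⟨fun i => div_nonneg (add_nonneg (hK''.1 i) (hpK.1 i)) (by norm_num), ?_, ?_⟩
    · show ∑ i : Fin W, (p'' i + p i) / 2 = 1
      rw [← Finset.sum_div, Finset.sum_add_distrib, hK''.2.1, hpK.2.1]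
      norm_num
    · show ∑ i : Fin W, (p'' i + p i) / 2 * e i = U
      have h16 : ∀ i : Fin W, (p'' i + p i) / 2 * e i
          = (p'' i * e i + p i * e i) / 2 := fun i => by ring
      rw [Finset.sum_congr rfl fun i _ => h16 i, ← Finset.sum_div,
        Finset.sum_add_distrib, hK''.2.2, hpK.2.2]
      norm_num
  have hFm : F p < F m := by
    have h17 := mid_strict hq0 hq1 hK''.1 hpK.1 hne
    rw [show (∑ i, p'' i ^ q) = F p'' from rfl, hFeq] at h17
    have h18 : (∑ i, ((p'' i + p i) / 2) ^ q) = F m := rfl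
    rw [h18] at h17
    have h19 : (∑ i : Fin W, p i ^ q) = F p := rfl
    rw [h19] at h17
    linarith
  exact absurd (hFmax m hmK) (not_le.2 hFm)
end
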